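/- Suppose there exists δ > 0 such that for all x, y ∈ ℝⁿ with x ≥ a, y ≥ a and x ≠ y, the ratio ‖g(x) − g(y)‖∞ / ‖x − y‖∞ does not belong to the interval [1 − δ, 1 + δ]. Let x⁺ ≥ a be a fixed point of g (g(x⁺) = x⁺). Then for any ε > 0, every ε-solution x (i.e., x ≥ a and ‖x − g(x)‖∞ ≤ ε) satisfies ‖x − x⁺‖∞ ≤ ε/δ. -/

import Mathlib

/-- If for some `δ > 0` the ratio `‖g x − g y‖∞ / ‖x − y‖∞` never lies in
`[1 − δ, 1 + δ]` for distinct `x, y ≥ a`, and `x⁺ ≥ a` is a fixed point of `g`,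
then every `ε`-solution `x` (i.e. `x ≥ a` and `‖x − g x‖∞ ≤ ε`) satisfies
`‖x − x⁺‖∞ ≤ ε / δ`. Here the norm on `Fin n → ℝ` is the sup norm. -/
theorem eps_solution_close_to_fixed_point (n : ℕ) (a : Fin n → ℝ)
    (g : (Fin n → ℝ) → (Fin n → ℝ)) (δ : ℝ) (hδ : 0 < δ)
    (hratio : ∀ x y : Fin n → ℝ, a ≤ x → a ≤ y → x ≠ y →
      ‖g x - g y‖ / ‖x - y‖ ∉ Set.Icc (1 - δ) (1 + δ))
    (xplus : Fin n → ℝ) (hxplus_ge : a ≤ xplus) (hfix : g xplus = xplus)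
    (ε : ℝ) (hε : 0 < ε)
    (x : Fin n → ℝ) (hx_ge : a ≤ x) (hx_sol : ‖x - g x‖ ≤ ε) :
    ‖x - xplus‖ ≤ ε / δ := by
  by_cases hxy : x = xplus
  · simp [hxy]
    positivity
  have hd : 0 < ‖x - xplus‖ := by
    rw [norm_pos_iff]
    exact sub_ne_zero_of_ne hxy
  have h := hratio x xplus hx_ge hxplus_ge hxy
  rw [Set.mem_Icc, not_and_or, not_le, not_le] at h
  set d := ‖x - xplus‖ with hdd
  set N := ‖g x - g xplus‖ with hN
  have h1 : d ≤ ε + N := by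
    calc d = ‖(x - g x) + (g x - xplus)‖ := by ring_nf; exact hdd
      _ ≤ ‖x - g x‖ + ‖g x - xplus‖ := norm_add_le _ _
      _ ≤ ε + N := by rw [hN, hfix]; linarith
  have h2 : N ≤ ε + d := by
    calc N = ‖(g x - x) + (x - xplus)‖ := by rw [hN, hfix]; ring_nf
      _ ≤ ‖g x - x‖ + d := norm_add_le _ _
      _ ≤ ε + d := by rw [norm_sub_rev]; linarith
  have key : δ * d ≤ ε := by
    rcases h with h | h
    · rw [div_lt_iff₀ hd] at h; nlinarith
    · rw [lt_div_iff₀ hd] at h; nlinarith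
  rw [le_div_iff₀ hδ]; linarith
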